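/- A continuous function on an interval need not have a derivative at any point: there exists a continuous function f : ℝ → ℝ that is nowhere differentiable. -/

import Mathlib

open Finset



/-- Distance to the nearest integer. -/
noncomputable def saw (x : ℝ) : ℝ := |x - round x|

lemma saw_le_half (x : ℝ) : saw x ≤ 1/2 := abs_sub_round x

lemma saw_le (x : ℝ) (m : ℤ) : saw x ≤ |x - m| := by
  rcases eq_or_ne m (round x) with h | h
  · simp [saw, h]
  · have h1 : (1:ℝ) ≤ |(m:ℝ) - round x| := by
      rw [← Int.cast_sub, ← Int.cast_abs]
      exact_mod_cast Int.one_le_abs (sub_ne_zero.2 h)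
    have h2 := abs_sub_round x
    have h3 : |(m:ℝ) - round x| ≤ |(m:ℝ) - x| + |x - round x| := abs_sub_le _ _ _
    have h4 : |x - (m:ℝ)| = |(m:ℝ) - x| := abs_sub_comm _ _
    unfold saw
    linarith

lemma saw_add_int (x : ℝ) (m : ℤ) : saw (x + m) = saw x := by
  unfold saw
  rw [round_add_intCast]
  push_cast
  ring_nf

lemma saw_lipschitz (a b : ℝ) : |saw a - saw b| ≤ |a - b| := by
  have h1 : saw a ≤ |a - b| + saw b := by
    have := saw_le a (round b)
    have h3 : |a - (round b : ℝ)| ≤ |a - b| + |b - round b| := abs_sub_le _ _ _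
    unfold saw at *; linarith
  have h2 : saw b ≤ |b - a| + saw a := by
    have := saw_le b (round a)
    have h3 : |b - (round a : ℝ)| ≤ |b - a| + |a - round a| := abs_sub_le _ _ _
    unfold saw at *; linarith
  rw [abs_sub_le_iff, abs_sub_comm a b]
  constructor <;> linarith [abs_sub_comm a b]

lemma saw_continuous : Continuous saw := by
  rw [Metric.continuous_iff]
  intro x ε hε
  exact ⟨ε, hε, fun y hy => lt_of_le_of_lt (by rw [Real.dist_eq, Real.dist_eq] at *; exact saw_lipschitz _ _) hy⟩

lemma saw_nonneg (x : ℝ) : 0 ≤ saw x := abs_nonneg _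

/-- On `[q, q+1/2]`, `saw t = t - q`. -/
lemma saw_eval_left (q : ℤ) (t : ℝ) (h1 : (q:ℝ) ≤ t) (h2 : t ≤ q + 1/2) :
    saw t = t - q := by
  refine le_antisymm ?_ ?_
  · have := saw_le t q
    rwa [abs_of_nonneg (by linarith)] at this
  · unfold saw
    rcases le_or_gt (round t) q with h | h
    · have hc : ((round t : ℤ):ℝ) ≤ (q:ℝ) := by exact_mod_cast h
      calc t - (q:ℝ) ≤ t - round t := by linarith
      _ ≤ |t - round t| := le_abs_self _
    · have hc : (q:ℝ) + 1 ≤ (round t : ℝ) := by exact_mod_cast (Int.add_one_le_iff.mpr h)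
      calc t - (q:ℝ) ≤ 1/2 := by linarith
      _ ≤ (round t : ℝ) - t := by linarith
      _ ≤ |t - round t| := by rw [abs_sub_comm]; exact le_abs_self _

/-- On `[q+1/2, q+1]`, `saw t = q + 1 - t`. -/
lemma saw_eval_right (q : ℤ) (t : ℝ) (h1 : (q:ℝ) + 1/2 ≤ t) (h2 : t ≤ q + 1) :
    saw t = (q:ℝ) + 1 - t := by
  refine le_antisymm ?_ ?_
  · have := saw_le t (q+1)
    rw [abs_of_nonpos (by push_cast; linarith)] at this
    push_cast at this ⊢; linarith
  · unfold saw
    rcases le_or_gt (round t) q with h | h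
    · have hc : ((round t : ℤ):ℝ) ≤ (q:ℝ) := by exact_mod_cast h
      calc (q:ℝ) + 1 - t ≤ 1/2 := by linarith
      _ ≤ t - round t := by linarith
      _ ≤ |t - round t| := le_abs_self _
    · have hc : (q:ℝ) + 1 ≤ (round t : ℝ) := by exact_mod_cast (Int.add_one_le_iff.mpr h)
      calc (q:ℝ) + 1 - t ≤ (round t : ℝ) - t := by linarith
      _ ≤ |t - round t| := by rw [abs_sub_comm]; exact le_abs_self _




/-- The Takagi-type function `∑ 2⁻ⁿ saw(2ⁿ x)`. -/
noncomputable def W (x : ℝ) : ℝ := ∑' n : ℕ, (1/2:ℝ)^n * saw (2^n * x)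

lemma W_summable (x : ℝ) : Summable (fun n : ℕ => (1/2:ℝ)^n * saw (2^n * x)) := by
  refine Summable.of_nonneg_of_le (fun n => mul_nonneg (by positivity) (saw_nonneg _))
    (fun n => ?_) summable_geometric_two
  have := saw_le_half (2^n * x)
  have h2 : (0:ℝ) < (1/2)^n := by positivity
  calc (1/2:ℝ)^n * saw (2^n * x) ≤ (1/2)^n * 1 := by nlinarith
  _ = (1/2)^n := mul_one _

lemma W_continuous : Continuous W := by
  refine continuous_tsum (f := fun n x => (1/2:ℝ)^n * saw (2^n * x)) (u := fun n => (1/2:ℝ)^n)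
    (fun n => Continuous.mul continuous_const (saw_continuous.comp (by continuity)))
    summable_geometric_two (fun n x => ?_)
  rw [Real.norm_eq_abs, abs_mul, abs_of_nonneg (saw_nonneg _), abs_of_nonneg (by positivity : (0:ℝ) ≤ (1/2)^n)]
  have := saw_le_half (2^n * x)
  have h2 : (0:ℝ) < (1/2:ℝ)^n := by positivity
  nlinarith

/-- Left endpoint of the level-`m` dyadic interval containing `x`. -/
noncomputable def um (x : ℝ) (m : ℕ) : ℝ := (⌊2^m * x⌋ : ℝ) / 2^m
noncomputable def vm (x : ℝ) (m : ℕ) : ℝ := ((⌊2^m * x⌋ : ℝ) + 1) / 2^m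
noncomputable def eps (x : ℝ) (n : ℕ) : ℝ := if Even ⌊2^(n+1) * x⌋ then 1 else -1
noncomputable def Ssum (x : ℝ) (m : ℕ) : ℝ := ∑ n ∈ range m, eps x n

lemma um_le (x : ℝ) (m : ℕ) : um x m ≤ x := by
  rw [um, div_le_iff₀ (by positivity), mul_comm]
  exact Int.floor_le _

lemma le_vm (x : ℝ) (m : ℕ) : x ≤ vm x m := by
  rw [vm, le_div_iff₀ (by positivity), mul_comm]
  exact le_of_lt (Int.lt_floor_add_one _)

lemma vm_sub_um (x : ℝ) (m : ℕ) : vm x m - um x m = (1/2:ℝ)^m := by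
  rw [vm, um, div_sub_div_same, add_sub_cancel_left]
  rw [one_div, one_div, inv_pow]

lemma um_mono (x : ℝ) {l m : ℕ} (h : l ≤ m) : um x l ≤ um x m := by
  have key : (2:ℤ)^(m-l) * ⌊2^l * x⌋ ≤ ⌊2^m * x⌋ := by
    rw [Int.le_floor]
    push_cast
    calc (2:ℝ)^(m-l) * (⌊2^l * x⌋ : ℝ) ≤ 2^(m-l) * (2^l * x) := by
          have := Int.floor_le ((2:ℝ)^l * x)
          have h2 : (0:ℝ) < 2^(m-l) := by positivity
          nlinarith
    _ = 2^m * x := by rw [← mul_assoc, ← pow_add]; congr 2; omega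
  rw [um, um, div_le_div_iff₀ (by positivity) (by positivity)]
  have hc : ((2:ℤ)^(m-l) * ⌊2^l * x⌋ : ℝ) ≤ (⌊2^m * x⌋ : ℝ) := by exact_mod_cast key
  push_cast at hc
  calc (⌊2^l*x⌋:ℝ) * 2^m = (2^(m-l) * (⌊2^l*x⌋:ℝ)) * 2^l := by
        rw [mul_comm ((2:ℝ)^(m-l)) _, mul_assoc, ← pow_add]; congr 2; omega
  _ ≤ (⌊2^m*x⌋:ℝ) * 2^l := by
        have h2 : (0:ℝ) < 2^l := by positivity
        nlinarith
lemma vm_anti (x : ℝ) {l m : ℕ} (h : l ≤ m) : vm x m ≤ vm x l := by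
  have key : ⌊2^m * x⌋ + 1 ≤ (2:ℤ)^(m-l) * (⌊2^l * x⌋ + 1) := by
    have h1 : ⌊2^m * x⌋ < (2:ℤ)^(m-l) * (⌊2^l * x⌋ + 1) := by
      rw [Int.floor_lt]
      push_cast
      calc (2:ℝ)^m * x = 2^(m-l) * (2^l * x) := by rw [← mul_assoc, ← pow_add]; congr 2; omega
      _ < 2^(m-l) * ((⌊2^l*x⌋:ℝ) + 1) := by
            have := Int.lt_floor_add_one ((2:ℝ)^l * x)
            have h2 : (0:ℝ) < 2^(m-l) := by positivity
            nlinarith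
    omega
  rw [vm, vm, div_le_div_iff₀ (by positivity) (by positivity)]
  have hc : ((⌊2^m * x⌋:ℝ) + 1) ≤ ((2:ℤ)^(m-l) * (⌊2^l * x⌋ + 1) : ℝ) := by exact_mod_cast key
  push_cast at hc
  calc ((⌊2^m*x⌋:ℝ)+1) * 2^l ≤ (2^(m-l) * ((⌊2^l*x⌋:ℝ)+1)) * 2^l := by
        have h2 : (0:ℝ) < 2^l := by positivity
        nlinarith
  _ = ((⌊2^l*x⌋:ℝ)+1) * 2^m := by
        rw [mul_comm ((2:ℝ)^(m-l)) _, mul_assoc, ← pow_add]; congr 2; omega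









lemma slope_eq (x : ℝ) (n : ℕ) (a b : ℝ) (ha : um x (n+1) ≤ a) (hab : a ≤ b)
    (hb : b ≤ vm x (n+1)) :
    saw (2^n * b) - saw (2^n * a) = eps x n * (2^n * (b - a)) := by
  set k := ⌊2^(n+1) * x⌋ with hk
  have hpn : (0:ℝ) < (2:ℝ)^n := by positivity
  have hla : (k:ℝ)/2 ≤ 2^n * a := by
    have h0 : (2:ℝ)^n * um x (n+1) = (k:ℝ)/2 := by
      rw [um, ← hk, pow_succ]; field_simp
    nlinarith [mul_le_mul_of_nonneg_left ha (le_of_lt hpn)]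
  have hub : (2:ℝ)^n * b ≤ ((k:ℝ)+1)/2 := by
    have h0 : (2:ℝ)^n * vm x (n+1) = ((k:ℝ)+1)/2 := by
      rw [vm, ← hk, pow_succ]; field_simp
    nlinarith [mul_le_mul_of_nonneg_left hb (le_of_lt hpn)]
  have hab' : (2:ℝ)^n * a ≤ 2^n * b := by nlinarith
  rcases Int.even_or_odd k with hpar | hpar
  · obtain ⟨q, hq⟩ := hpar
    have hqr : (k:ℝ) = q + q := by exact_mod_cast hq
    have e1 : saw (2^n * a) = 2^n * a - q :=
      saw_eval_left q _ (by linarith) (by linarith)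
    have e2 : saw (2^n * b) = 2^n * b - q :=
      saw_eval_left q _ (by linarith) (by linarith)
    have heps : eps x n = 1 := by rw [eps, ← hk, if_pos ⟨q, hq⟩]
    rw [e1, e2, heps]; ring
  · obtain ⟨q, hq⟩ := hpar
    have hqr : (k:ℝ) = 2*q + 1 := by exact_mod_cast hq
    have e1 : saw (2^n * a) = (q:ℝ) + 1 - 2^n * a :=
      saw_eval_right q _ (by linarith) (by linarith)
    have e2 : saw (2^n * b) = (q:ℝ) + 1 - 2^n * b :=
      saw_eval_right q _ (by linarith) (by linarith)
    have heps : eps x n = -1 := by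
      rw [eps, ← hk, if_neg (Int.not_even_iff_odd.mpr ⟨q, hq⟩)]
    rw [e1, e2, heps]; ring

lemma W_diff (x : ℝ) (m : ℕ) : W (vm x m) - W (um x m) = Ssum x m * (1/2)^m := by
  have h1 := W_summable (vm x m)
  have h2 := W_summable (um x m)
  rw [W, W, ← h1.tsum_sub h2,
    tsum_eq_sum (s := range m) (f := fun n => (1/2:ℝ)^n * saw (2^n * vm x m) - (1/2:ℝ)^n * saw (2^n * um x m)) ?_]
  · rw [Ssum, sum_mul]
    refine Finset.sum_congr rfl (fun n hn => ?_)
    rw [mem_range] at hn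
    have hmm : um x m ≤ vm x m := le_trans (um_le x m) (le_vm x m)
    have hs := slope_eq x n (um x m) (vm x m) (um_mono x hn) hmm (vm_anti x hn)
    have hone : (1/2:ℝ)^n * 2^n = 1 := by
      rw [← mul_pow]; norm_num
    calc (1/2:ℝ)^n * saw (2^n * vm x m) - (1/2:ℝ)^n * saw (2^n * um x m)
        = (1/2:ℝ)^n * (saw (2^n * vm x m) - saw (2^n * um x m)) := by ring
      _ = (1/2:ℝ)^n * (eps x n * (2^n * (vm x m - um x m))) := by rw [hs]
      _ = ((1/2:ℝ)^n * 2^n) * eps x n * (vm x m - um x m) := by ring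
      _ = eps x n * (1/2)^m := by rw [hone, vm_sub_um]; ring
  · intro n hn
    rw [mem_range, not_lt] at hn
    obtain ⟨j, rfl⟩ := Nat.exists_eq_add_of_le hn
    show (1/2:ℝ)^(m+j) * saw (2^(m+j) * vm x m) - (1/2:ℝ)^(m+j) * saw (2^(m+j) * um x m) = 0
    have hkey : (2:ℝ)^(m+j) * vm x m = 2^(m+j) * um x m + ((2^j : ℤ) : ℝ) := by
      rw [vm, um, pow_add]
      push_cast
      field_simp
    rw [hkey, saw_add_int]
    ring

/-- There exists a continuous function `f : ℝ → ℝ` that is nowhere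
differentiable. -/
theorem exists_continuous_nowhere_differentiable :
    ∃ f : ℝ → ℝ, Continuous f ∧ ∀ x : ℝ, ¬ DifferentiableAt ℝ f x := by
  refine ⟨W, W_continuous, fun x hdiff => ?_⟩
  set c := deriv W x with hc
  have hd : HasDerivAt W c x := hdiff.hasDerivAt
  rw [hasDerivAt_iff_isLittleO] at hd
  have hev := hd.def (by norm_num : (0:ℝ) < 1/8)
  rw [Metric.eventually_nhds_iff] at hev
  obtain ⟨δ, hδ, hball⟩ := hev
  have key : ∀ m : ℕ, (1/2:ℝ)^m < δ → |Ssum x m - c| ≤ 1/4 := by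
    intro m hm
    have hum := um_le x m
    have hvm := le_vm x m
    have hsub := vm_sub_um x m
    have hpow : (0:ℝ) < (1/2:ℝ)^m := by positivity
    have hu : dist (um x m) x < δ := by
      rw [Real.dist_eq, abs_of_nonpos (by linarith)]; linarith
    have hv : dist (vm x m) x < δ := by
      rw [Real.dist_eq, abs_of_nonneg (by linarith)]; linarith
    have B1 := hball hv
    have B2 := hball hu
    simp only [Real.norm_eq_abs, smul_eq_mul] at B1 B2
    have hb1 : |W (vm x m) - W x - (vm x m - x) * c| ≤ 1/8 * (1/2)^m := by
      refine B1.trans ?_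
      rw [abs_of_nonneg (by linarith)]; linarith
    have hb2 : |W (um x m) - W x - (um x m - x) * c| ≤ 1/8 * (1/2)^m := by
      refine B2.trans ?_
      rw [abs_of_nonpos (by linarith)]; linarith
    have hdiffb : |W (vm x m) - W (um x m) - (vm x m - um x m) * c| ≤ 1/4 * (1/2)^m := by
      have heq : W (vm x m) - W (um x m) - (vm x m - um x m) * c
          = (W (vm x m) - W x - (vm x m - x) * c) - (W (um x m) - W x - (um x m - x) * c) := by
        ring
      rw [heq]
      exact (abs_sub _ _).trans (by linarith)
    rw [W_diff x m, hsub] at hdiffb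
    have hfin : |Ssum x m - c| * (1/2)^m ≤ 1/4 * (1/2)^m := by
      calc |Ssum x m - c| * (1/2)^m = |(Ssum x m - c) * (1/2)^m| := by
            rw [abs_mul, abs_of_nonneg (le_of_lt hpow)]
        _ = |Ssum x m * (1/2)^m - (1/2)^m * c| := by congr 1; ring
        _ ≤ 1/4 * (1/2)^m := hdiffb
    exact le_of_mul_le_mul_right (by linarith) hpow
  obtain ⟨m, hm⟩ := exists_pow_lt_of_lt_one hδ (by norm_num : (1/2:ℝ) < 1)
  have hpow : (0:ℝ) < (1/2:ℝ)^m := by positivity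
  have hm1 : (1/2:ℝ)^(m+1) < δ := by
    have h1 : (1/2:ℝ)^(m+1) = (1/2)^m * (1/2) := by ring
    nlinarith
  have k1 := key m hm
  have k2 := key (m+1) hm1
  have heps : Ssum x (m+1) - Ssum x m = eps x m := by
    rw [Ssum, Ssum, sum_range_succ]; ring
  have habs : |eps x m| = 1 := by
    rw [eps]; split <;> simp
  have hle : |eps x m| ≤ 1/2 := by
    rw [← heps]
    have heq : Ssum x (m+1) - Ssum x m = (Ssum x (m+1) - c) - (Ssum x m - c) := by ring
    rw [heq]
    exact (abs_sub _ _).trans (by linarith)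
  rw [habs] at hle
  linarith
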